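/- Let c ∈ (0,1), let C₁.₅ > 0, and let C₃.₂ be a sufficiently large universal constant. Let k ≥ 2 and 1 ≤ d ≤ C₁.₅ ln k be integers, Δ̄ ∈ (0,1), Δ = C₃.₂·Δ̄, and let y_1,…,y_{k₀} ∈ ℝ^d (k₀ ≤ k) satisfy ‖y_r − y_s‖₂ ≥ Δ√d for r ≠ s, with weights satisfying c/k ≤ w_r ≤ 1/(ck). Set ν = Σ_r w_r δ_{y_r} and ν_j = w_j δ_{y_j}. Then for every j ∈ [k₀] and every x with ‖x − y_j‖₂ ≤ (1.6/100)·Δ̄·d/√(C₁.₅ ln k), one has 0 ≤ log (γ_{Δ̄} ⋆ ν)(x) − log (γ_{Δ̄} ⋆ ν_j)(x) ≤ 10³¹·e^{1.21/20000}/(C₃.₂³⁰·c²·d^{15}). In particular, on such a neighborhood of y_j the function γ_{Δ̄} ⋆ ν is approximately log-concave, being uniformly close in log-scale to the log-concave function γ_{Δ̄} ⋆ ν_j. -/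

import Mathlib

set_option maxHeartbeats 1000000

open MeasureTheory Real
open Metric Filter

/-- The density of the centered spherical Gaussian on `ℝ^d` whose one-dimensional marginals
have variance `σ²`: `γ_σ(z) = (2πσ²)^(-d/2) exp(-‖z‖²/(2σ²))`. -/
noncomputable def gaussDensity (d : ℕ) (σ : ℝ) (z : EuclideanSpace ℝ (Fin d)) : ℝ :=
  (2 * π * σ ^ 2) ^ (-(d : ℝ) / 2) * Real.exp (-‖z‖ ^ 2 / (2 * σ ^ 2))

/-- `Γ(d/2 + 1) ≤ (√d)^d`. -/
lemma gammaA : ∀ d : ℕ, Real.Gamma ((d : ℝ) / 2 + 1) ≤ Real.sqrt d ^ d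
  | 0 => by simp [Real.Gamma_one]
  | 1 => by
      have h : Real.Gamma ((1 : ℕ) / 2 + 1 : ℝ) = Real.sqrt π / 2 := by
        norm_num
        rw [show (3:ℝ)/2 = 1/2 + 1 by ring, Real.Gamma_add_one (by norm_num),
          Real.Gamma_one_half_eq]
        ring
      rw [h]
      have h2 : Real.sqrt π ≤ Real.sqrt 4 := Real.sqrt_le_sqrt Real.pi_le_four
      have h4 : Real.sqrt 4 = 2 := by
        rw [show (4:ℝ) = 2^2 by norm_num, Real.sqrt_sq (by norm_num)]
      have h1 : Real.sqrt (1:ℕ) = 1 := by norm_num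
      rw [h1]
      norm_num
      linarith [h2, h4.le]
  | (n+2) => by
      have ih := gammaA n
      have h2 : ((n + 2 : ℕ) : ℝ) / 2 + 1 = ((n : ℝ) / 2 + 1) + 1 := by push_cast; ring
      rw [h2, Real.Gamma_add_one (by positivity)]
      have hΓ : 0 < Real.Gamma ((n : ℝ) / 2 + 1) := Real.Gamma_pos_of_pos (by positivity)
      have hs : Real.sqrt n ^ n ≤ Real.sqrt (n + 2 : ℕ) ^ n :=
        pow_le_pow_left₀ (Real.sqrt_nonneg _) (Real.sqrt_le_sqrt (by push_cast; linarith)) n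
      have key : Real.sqrt ((n + 2 : ℕ) : ℝ) ^ (n + 2) =
          ((n : ℝ) + 2) * Real.sqrt ((n + 2 : ℕ) : ℝ) ^ n := by
        rw [pow_add, Real.sq_sqrt (by positivity)]
        push_cast; ring
      rw [key]
      have : ((n : ℝ) / 2 + 1) * Real.Gamma ((n : ℝ) / 2 + 1) ≤
          ((n : ℝ) / 2 + 1) * Real.sqrt n ^ n := by
        apply mul_le_mul_of_nonneg_left ih (by positivity)
      refine this.trans ?_
      apply mul_le_mul (by linarith) hs (by positivity) (by positivity)

lemma keySum (d k₀ : ℕ) (hd : 1 ≤ d) (C Δb : ℝ) (hC : (1000000 : ℝ) ≤ C) (hΔb : 0 < Δb)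
    (y : Fin k₀ → EuclideanSpace ℝ (Fin d)) (x : EuclideanSpace ℝ (Fin d)) (j : Fin k₀)
    (hsep : ∀ r r' : Fin k₀, r ≠ r' → (C * Δb) * Real.sqrt d ≤ dist (y r) (y r'))
    (hρ : dist x (y j) ≤ 0.016 * (Δb * Real.sqrt d)) :
    ∑ r ∈ Finset.univ.erase j,
        Real.exp ((dist x (y j)) ^ 2 / (2 * Δb ^ 2) - (dist x (y r)) ^ 2 / (2 * Δb ^ 2)) ≤
      Real.exp (-(0.0144 * C ^ 2 * d)) := by
  haveI : Nonempty (Fin d) := Fin.pos_iff_nonempty.mp hd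
  have hdR : (1 : ℝ) ≤ (d : ℝ) := by exact_mod_cast hd
  have hsd : (1 : ℝ) ≤ Real.sqrt d := Real.one_le_sqrt.mpr hdR
  set δ : ℝ := C * Δb * Real.sqrt d with hδdef
  have hδpos : 0 < δ := by positivity
  have hρδ : dist x (y j) ≤ δ / 100 := by
    refine hρ.trans ?_
    rw [hδdef]
    nlinarith [Real.sqrt_nonneg (d:ℝ), hΔb]
  set b : ℝ := 1 / (16 * Δb ^ 2) with hbdef
  have hb : 0 < b := by positivity
  set s : ℝ := δ / 2 with hsdef
  have hspos : 0 < s := by positivity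
  set G : EuclideanSpace ℝ (Fin d) → ℝ := fun z => Real.exp (-b * ‖z - x‖ ^ 2) with hGdef
  -- integrability of G
  have hGint : Integrable G := by
    have h0 : Integrable (fun v : EuclideanSpace ℝ (Fin d) => Real.exp (-b * ‖v‖ ^ 2)) := by
      have hc := GaussianFourier.integrable_cexp_neg_mul_sq_norm_add (b := (b : ℂ)) (by simpa using hb)
        0 (0 : EuclideanSpace ℝ (Fin d))
      have := hc.norm
      refine this.congr (Eventually.of_forall fun v => ?_)
      simp only [Complex.norm_exp]
      norm_num
      left
      norm_cast
    exact h0.comp_sub_right x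
  -- the volume of each small ball, as a real number
  set VR : ℝ := s ^ d * (Real.sqrt π ^ d / Real.Gamma (d / 2 + 1)) with hVRdef
  have hΓpos : 0 < Real.Gamma ((d : ℝ) / 2 + 1) := Real.Gamma_pos_of_pos (by positivity)
  have hVRpos : 0 < VR := by
    rw [hVRdef]; positivity
  have hvol : ∀ r : Fin k₀, (volume (ball (y r) s)).toReal = VR := by
    intro r
    rw [EuclideanSpace.volume_ball]
    rw [ENNReal.toReal_mul, ENNReal.toReal_pow, ENNReal.toReal_ofReal hspos.le,
      ENNReal.toReal_ofReal (by positivity)]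
    simp [Fintype.card_fin, hVRdef]
  -- per-ball estimate
  have hball : ∀ r : Fin k₀, r ≠ j →
      Real.exp ((dist x (y j)) ^ 2 / (2 * Δb ^ 2) - (dist x (y r)) ^ 2 / (2 * Δb ^ 2)) * VR ≤
        Real.exp (-(0.2304 * δ ^ 2) * b) * ∫ z in ball (y r) s, G z := by
    intro r hr
    have hD : 0.99 * δ ≤ dist x (y r) := by
      have h1 := hsep j r (Ne.symm hr)
      have h2 := dist_triangle (y j) x (y r)
      rw [dist_comm (y j) x] at h2
      calc 0.99 * δ ≤ δ - δ / 100 := by linarith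
        _ ≤ dist (y j) (y r) - dist x (y j) := by
            have : δ ≤ dist (y j) (y r) := h1
            linarith
        _ ≤ dist x (y r) := by linarith
    have hpt : ∀ z ∈ ball (y r) s,
        Real.exp ((dist x (y j)) ^ 2 / (2 * Δb ^ 2) - (dist x (y r)) ^ 2 / (2 * Δb ^ 2)
          + 0.2304 * δ ^ 2 * b) ≤ G z := by
      intro z hz
      rw [hGdef]
      apply Real.exp_le_exp.mpr
      have hzx : ‖z - x‖ ≤ dist x (y r) + s := by
        have h1 : dist z (y r) < s := mem_ball.mp hz
        have h2 := dist_triangle z (y r) x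
        rw [show ‖z - x‖ = dist z x from (dist_eq_norm z x).symm]
        rw [dist_comm (y r) x] at h2
        linarith
      have hzx0 : 0 ≤ ‖z - x‖ := norm_nonneg _
      have hρ0 : 0 ≤ dist x (y j) := dist_nonneg
      set ρ := dist x (y j) with hρdef
      set D := dist x (y r) with hDdef
      have hDpos : 0 < D := lt_of_lt_of_le (by positivity) hD
      have hzx' : ‖z - x‖ ≤ D + δ / 2 := by rw [hsdef] at hzx; linarith
      have hu2 : ‖z - x‖ ^ 2 ≤ (D + δ / 2) ^ 2 := by nlinarith
      have hρ2 : ρ ^ 2 ≤ (δ / 100) ^ 2 := by nlinarith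
      rw [hbdef, ← sub_nonneg]
      have heq : -(1 / (16 * Δb ^ 2)) * ‖z - x‖ ^ 2 -
          (ρ ^ 2 / (2 * Δb ^ 2) - D ^ 2 / (2 * Δb ^ 2) + 0.2304 * δ ^ 2 * (1 / (16 * Δb ^ 2))) =
          (8 * D ^ 2 - 8 * ρ ^ 2 - 0.2304 * δ ^ 2 - ‖z - x‖ ^ 2) / (16 * Δb ^ 2) := by
        field_simp
        ring
      rw [heq]
      apply div_nonneg _ (by positivity)
      nlinarith [hu2, hρ2, hD, hδpos, sq_nonneg (D - δ), mul_pos hδpos hδpos]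
    -- integrate the constant lower bound over the ball
    set E : ℝ := (dist x (y j)) ^ 2 / (2 * Δb ^ 2) - (dist x (y r)) ^ 2 / (2 * Δb ^ 2) with hEdef
    have hconst : ∫ _ in ball (y r) s, Real.exp (E + 0.2304 * δ ^ 2 * b) ∂volume =
        Real.exp (E + 0.2304 * δ ^ 2 * b) * VR := by
      rw [setIntegral_const, measureReal_def, hvol r, smul_eq_mul, mul_comm]
    have hmono : ∫ _ in ball (y r) s, Real.exp (E + 0.2304 * δ ^ 2 * b) ∂volume ≤
        ∫ z in ball (y r) s, G z := by
      refine setIntegral_mono_on (integrableOn_const measure_ball_lt_top.ne)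
        hGint.integrableOn measurableSet_ball ?_
      intro z hz
      exact hpt z hz
    rw [hconst] at hmono
    calc Real.exp E * VR
        = Real.exp (-(0.2304 * δ ^ 2) * b) * (Real.exp (E + 0.2304 * δ ^ 2 * b) * VR) := by
          conv_rhs => rw [← mul_assoc, ← Real.exp_add,
            show -(0.2304 * δ ^ 2) * b + (E + 0.2304 * δ ^ 2 * b) = E by ring]
      _ ≤ Real.exp (-(0.2304 * δ ^ 2) * b) * ∫ z in ball (y r) s, G z := by
          exact mul_le_mul_of_nonneg_left hmono (Real.exp_nonneg _)
  -- sum the per-ball estimates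
  have hdisj : Set.Pairwise ↑(Finset.univ.erase j) ((Function.onFun Disjoint fun r : Fin k₀ => ball (y r) s)) := by
    intro r hr r' hr' hne
    exact ball_disjoint_ball (by rw [hsdef]; linarith [hsep r r' hne])
  have hsum2 : ∑ r ∈ Finset.univ.erase j, ∫ z in ball (y r) s, G z ≤ ∫ z, G z := by
    rw [← integral_biUnion_finset (Finset.univ.erase j) (fun r _ => measurableSet_ball) hdisj
      (fun r _ => hGint.integrableOn)]
    exact setIntegral_le_integral hGint (Eventually.of_forall fun z => (Real.exp_pos _).le)
  have hGtot : ∫ z, G z = (π / b) ^ ((d : ℝ) / 2) := by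
    rw [hGdef]
    rw [MeasureTheory.integral_sub_right_eq_self
      (fun v : EuclideanSpace ℝ (Fin d) => Real.exp (-b * ‖v‖ ^ 2)) x]
    rw [GaussianFourier.integral_rexp_neg_mul_sq_norm hb]
    congr 1
    rw [finrank_euclideanSpace_fin]
  -- identify the exponential constant
  have hδ2 : δ ^ 2 = C ^ 2 * Δb ^ 2 * d := by
    rw [hδdef, mul_pow, mul_pow, Real.sq_sqrt (by positivity : (0:ℝ) ≤ (d:ℝ))]
  have hexp_eq : -(0.2304 * δ ^ 2) * b = -(0.0144 * C ^ 2 * d) := by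
    rw [hδ2, hbdef]
    field_simp
    ring
  -- bound the Gaussian integral by the ball volume
  have hVRge : (π / b) ^ ((d : ℝ) / 2) ≤ VR := by
    set u : ℝ := 4 * Real.sqrt π * Δb with hudef
    have hu0 : 0 ≤ u := by positivity
    have hπb : π / b = u ^ 2 := by
      rw [hbdef, hudef, mul_pow, mul_pow, Real.sq_sqrt Real.pi_pos.le]
      field_simp
      ring
    have hrpow : (π / b) ^ ((d : ℝ) / 2) = u ^ d := by
      rw [hπb, ← Real.rpow_natCast u 2, ← Real.rpow_mul hu0,
        show ((2:ℕ):ℝ) * ((d:ℝ) / 2) = ((d:ℕ):ℝ) by push_cast; ring, Real.rpow_natCast]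
    rw [hrpow, hVRdef, ← mul_div_assoc, le_div_iff₀ hΓpos]
    calc u ^ d * Real.Gamma ((d:ℝ) / 2 + 1) ≤ u ^ d * Real.sqrt d ^ d := by
          exact mul_le_mul_of_nonneg_left (gammaA d) (by positivity)
      _ = (u * Real.sqrt d) ^ d := (mul_pow u (Real.sqrt d) d).symm
      _ ≤ (s * Real.sqrt π) ^ d := by
          apply pow_le_pow_left₀ (by positivity)
          rw [hudef, hsdef, hδdef]
          have hsπ : 0 ≤ Real.sqrt π := Real.sqrt_nonneg _
          have base : 0 ≤ Real.sqrt π * Δb * Real.sqrt d := by positivity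
          nlinarith [mul_nonneg (by linarith : (0:ℝ) ≤ C / 2 - 4) base]
      _ = s ^ d * Real.sqrt π ^ d := by rw [mul_pow]
  -- put everything together
  have hsum3 : (∑ r ∈ Finset.univ.erase j,
      Real.exp ((dist x (y j)) ^ 2 / (2 * Δb ^ 2) - (dist x (y r)) ^ 2 / (2 * Δb ^ 2))) * VR ≤
      Real.exp (-(0.0144 * C ^ 2 * d)) * VR := by
    calc (∑ r ∈ Finset.univ.erase j,
        Real.exp ((dist x (y j)) ^ 2 / (2 * Δb ^ 2) - (dist x (y r)) ^ 2 / (2 * Δb ^ 2))) * VR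
        = ∑ r ∈ Finset.univ.erase j,
            Real.exp ((dist x (y j)) ^ 2 / (2 * Δb ^ 2) - (dist x (y r)) ^ 2 / (2 * Δb ^ 2)) * VR := by
          rw [Finset.sum_mul]
      _ ≤ ∑ r ∈ Finset.univ.erase j,
            Real.exp (-(0.2304 * δ ^ 2) * b) * ∫ z in ball (y r) s, G z :=
          Finset.sum_le_sum (fun r hr => hball r (Finset.ne_of_mem_erase hr))
      _ = Real.exp (-(0.2304 * δ ^ 2) * b) *
            ∑ r ∈ Finset.univ.erase j, ∫ z in ball (y r) s, G z := by
          rw [Finset.mul_sum]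
      _ ≤ Real.exp (-(0.2304 * δ ^ 2) * b) * ∫ z, G z :=
          mul_le_mul_of_nonneg_left hsum2 (Real.exp_nonneg _)
      _ = Real.exp (-(0.0144 * C ^ 2 * d)) * (π / b) ^ ((d : ℝ) / 2) := by
          rw [hGtot, hexp_eq]
      _ ≤ Real.exp (-(0.0144 * C ^ 2 * d)) * VR :=
          mul_le_mul_of_nonneg_left hVRge (Real.exp_nonneg _)
  exact le_of_mul_le_mul_right hsum3 hVRpos

/-- For `c ∈ (0,1)`, `C₁.₅ > 0` and a sufficiently large universal constant
`C₃.₂`, with `Δ = C₃.₂·Δ̄`, well-separated centers and weights in `[c/k, 1/(ck)]`: near each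
center `y_j` (within `(1.6/100)·Δ̄·d/√(C₁.₅ ln k)`),
`0 ≤ log (γ_{Δ̄} ⋆ ν)(x) − log (γ_{Δ̄} ⋆ ν_j)(x) ≤ 10³¹·e^(1.21/20000)/(C₃.₂³⁰·c²·d¹⁵)`,
so `γ_{Δ̄} ⋆ ν` is approximately log-concave near `y_j`. -/
theorem mixture_approx_log_concave_near_center :
    ∃ C₃₂₀ : ℝ, ∀ C₃₂ : ℝ, C₃₂₀ ≤ C₃₂ →
      ∀ (c : ℝ), 0 < c → c < 1 →
        ∀ (C₁₅ : ℝ), 0 < C₁₅ →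
          ∀ (k d k₀ : ℕ), 2 ≤ k → 1 ≤ d → (d : ℝ) ≤ C₁₅ * Real.log k → 1 ≤ k₀ → k₀ ≤ k →
            ∀ (Δb : ℝ), 0 < Δb → Δb < 1 →
              ∀ (y : Fin k₀ → EuclideanSpace ℝ (Fin d)) (w : Fin k₀ → ℝ),
                (∀ r, c / k ≤ w r) → (∀ r, w r ≤ 1 / (c * k)) →
                  (∀ r r' : Fin k₀, r ≠ r' →
                      (C₃₂ * Δb) * Real.sqrt d ≤ dist (y r) (y r')) →
                    ∀ (j : Fin k₀) (x : EuclideanSpace ℝ (Fin d)),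
                      dist x (y j) ≤ (1.6 / 100) * Δb * d / Real.sqrt (C₁₅ * Real.log k) →
                        0 ≤ Real.log (∑ r : Fin k₀, w r * gaussDensity d Δb (x - y r)) -
                            Real.log (w j * gaussDensity d Δb (x - y j)) ∧
                          Real.log (∑ r : Fin k₀, w r * gaussDensity d Δb (x - y r)) -
                              Real.log (w j * gaussDensity d Δb (x - y j)) ≤
                            10 ^ 31 * Real.exp (1.21 / 20000) /
                              (C₃₂ ^ 30 * c ^ 2 * (d : ℝ) ^ 15) := by
  refine ⟨1000000, ?_⟩
  intro C₃₂ hC c hc0 hc1 C₁₅ hC15 k d k₀ hk hd hdlog hk₀1 hk₀k Δb hΔb0 hΔb1 y w hwlo hwhi hsep j x hx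
  have hkR : (2 : ℝ) ≤ (k : ℝ) := by exact_mod_cast hk
  have hlogk : 0 < Real.log k := Real.log_pos (by linarith)
  have hdR : (1 : ℝ) ≤ (d : ℝ) := by exact_mod_cast hd
  have hkpos : (0 : ℝ) < k := by linarith
  -- the distance bound in terms of √d
  have hρ : dist x (y j) ≤ 0.016 * (Δb * Real.sqrt d) := by
    refine hx.trans ?_
    have h1 : (d : ℝ) / Real.sqrt (C₁₅ * Real.log k) ≤ Real.sqrt d := by
      rw [div_le_iff₀ (by positivity)]
      have h2 : Real.sqrt d * Real.sqrt d = (d : ℝ) := Real.mul_self_sqrt (by positivity)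
      have h3 : Real.sqrt d ≤ Real.sqrt (C₁₅ * Real.log k) := Real.sqrt_le_sqrt hdlog
      nlinarith [Real.sqrt_nonneg (d : ℝ)]
    calc (1.6 / 100) * Δb * d / Real.sqrt (C₁₅ * Real.log k)
        = 0.016 * Δb * ((d : ℝ) / Real.sqrt (C₁₅ * Real.log k)) := by ring
      _ ≤ 0.016 * Δb * Real.sqrt d := by
          exact mul_le_mul_of_nonneg_left h1 (by positivity)
      _ = 0.016 * (Δb * Real.sqrt d) := by ring
  -- basic positivity
  have hgpos : ∀ z : EuclideanSpace ℝ (Fin d), 0 < gaussDensity d Δb z := by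
    intro z
    unfold gaussDensity
    positivity
  have hwpos : ∀ r, 0 < w r := fun r => lt_of_lt_of_le (by positivity) (hwlo r)
  set S := ∑ r : Fin k₀, w r * gaussDensity d Δb (x - y r) with hSdef
  set T := w j * gaussDensity d Δb (x - y j) with hTdef
  have hTpos : 0 < T := mul_pos (hwpos j) (hgpos _)
  have hTS : T ≤ S :=
    Finset.single_le_sum (f := fun r => w r * gaussDensity d Δb (x - y r))
      (fun r _ => (mul_pos (hwpos r) (hgpos _)).le) (Finset.mem_univ j)
  have hSpos : 0 < S := lt_of_lt_of_le hTpos hTS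
  constructor
  · exact sub_nonneg.mpr (Real.log_le_log hTpos hTS)
  -- upper bound
  have hEsum := keySum d k₀ hd C₃₂ Δb hC hΔb0 y x j hsep hρ
  -- ratio of gaussians
  have hgr : ∀ r : Fin k₀, gaussDensity d Δb (x - y r) =
      Real.exp ((dist x (y j)) ^ 2 / (2 * Δb ^ 2) - (dist x (y r)) ^ 2 / (2 * Δb ^ 2)) *
        gaussDensity d Δb (x - y j) := by
    intro r
    unfold gaussDensity
    rw [show ‖x - y r‖ = dist x (y r) from (dist_eq_norm x (y r)).symm,
      show ‖x - y j‖ = dist x (y j) from (dist_eq_norm x (y j)).symm]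
    have hee : Real.exp ((dist x (y j)) ^ 2 / (2 * Δb ^ 2) - (dist x (y r)) ^ 2 / (2 * Δb ^ 2)) *
        Real.exp (-dist x (y j) ^ 2 / (2 * Δb ^ 2)) =
        Real.exp (-dist x (y r) ^ 2 / (2 * Δb ^ 2)) := by
      rw [← Real.exp_add]
      congr 1
      ring
    rw [← hee]
    ring
  -- per-term bound
  have hwr : ∀ r, w r ≤ (c ^ 2)⁻¹ * w j := by
    intro r
    have h1 := hwhi r
    have h2 := hwlo j
    have : (1 : ℝ) / (c * k) = (c ^ 2)⁻¹ * (c / k) := by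
      field_simp
    calc w r ≤ 1 / (c * k) := h1
      _ = (c ^ 2)⁻¹ * (c / k) := this
      _ ≤ (c ^ 2)⁻¹ * w j := by
          exact mul_le_mul_of_nonneg_left h2 (by positivity)
  have hterm2 : ∀ r ∈ Finset.univ.erase j, w r * gaussDensity d Δb (x - y r) ≤
      (c ^ 2)⁻¹ *
        Real.exp ((dist x (y j)) ^ 2 / (2 * Δb ^ 2) - (dist x (y r)) ^ 2 / (2 * Δb ^ 2)) * T := by
    intro r _
    rw [hgr r, hTdef]
    have h1 : w r * (Real.exp ((dist x (y j)) ^ 2 / (2 * Δb ^ 2) -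
        (dist x (y r)) ^ 2 / (2 * Δb ^ 2)) * gaussDensity d Δb (x - y j)) =
        Real.exp ((dist x (y j)) ^ 2 / (2 * Δb ^ 2) - (dist x (y r)) ^ 2 / (2 * Δb ^ 2)) *
          gaussDensity d Δb (x - y j) * w r := by ring
    rw [h1]
    have h2 : (c ^ 2)⁻¹ * Real.exp ((dist x (y j)) ^ 2 / (2 * Δb ^ 2) -
        (dist x (y r)) ^ 2 / (2 * Δb ^ 2)) * (w j * gaussDensity d Δb (x - y j)) =
        Real.exp ((dist x (y j)) ^ 2 / (2 * Δb ^ 2) - (dist x (y r)) ^ 2 / (2 * Δb ^ 2)) *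
          gaussDensity d Δb (x - y j) * ((c ^ 2)⁻¹ * w j) := by ring
    rw [h2]
    exact mul_le_mul_of_nonneg_left (hwr r)
      (mul_nonneg (Real.exp_nonneg _) (hgpos _).le)
  -- the tail sum
  set ε : ℝ := (c ^ 2)⁻¹ * Real.exp (-(0.0144 * C₃₂ ^ 2 * d)) with hεdef
  have hεpos : 0 < ε := by positivity
  have htail : ∑ r ∈ Finset.univ.erase j, w r * gaussDensity d Δb (x - y r) ≤ ε * T := by
    calc ∑ r ∈ Finset.univ.erase j, w r * gaussDensity d Δb (x - y r)
        ≤ ∑ r ∈ Finset.univ.erase j, (c ^ 2)⁻¹ *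
            Real.exp ((dist x (y j)) ^ 2 / (2 * Δb ^ 2) - (dist x (y r)) ^ 2 / (2 * Δb ^ 2)) * T :=
          Finset.sum_le_sum hterm2
      _ = (c ^ 2)⁻¹ * (∑ r ∈ Finset.univ.erase j,
            Real.exp ((dist x (y j)) ^ 2 / (2 * Δb ^ 2) - (dist x (y r)) ^ 2 / (2 * Δb ^ 2))) * T := by
          rw [← Finset.sum_mul, ← Finset.mul_sum]
      _ ≤ (c ^ 2)⁻¹ * Real.exp (-(0.0144 * C₃₂ ^ 2 * d)) * T := by
          apply mul_le_mul_of_nonneg_right _ hTpos.le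
          exact mul_le_mul_of_nonneg_left hEsum (by positivity)
      _ = ε * T := by rw [hεdef]
  have hS_le : S ≤ (1 + ε) * T := by
    have hsplit : T + (∑ r ∈ Finset.univ.erase j, w r * gaussDensity d Δb (x - y r)) = S :=
      Finset.add_sum_erase Finset.univ (fun r => w r * gaussDensity d Δb (x - y r))
        (Finset.mem_univ j)
    nlinarith [htail, hsplit, hTpos]
  -- log estimate
  have hlog : Real.log S - Real.log T ≤ ε := by
    have h1 : Real.log S ≤ Real.log ((1 + ε) * T) := Real.log_le_log hSpos hS_le
    rw [Real.log_mul (by positivity) hTpos.ne'] at h1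
    have h2 : Real.log (1 + ε) ≤ ε := by
      have := Real.log_le_sub_one_of_pos (show (0:ℝ) < 1 + ε by linarith)
      linarith
    linarith
  refine hlog.trans ?_
  -- final numeric estimate
  set t : ℝ := 0.0144 * C₃₂ ^ 2 * d with htdef
  have ht : 0 < t := by
    rw [htdef]
    have : (0:ℝ) < C₃₂ := by linarith
    positivity
  have hP : (0:ℝ) < C₃₂ ^ 30 * (d : ℝ) ^ 15 := by
    have : (0:ℝ) < C₃₂ := by linarith
    positivity
  have hexp30 : Real.exp (-t) = (Real.exp (-(t / 30))) ^ 30 := by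
    rw [← Real.exp_nat_mul]
    congr 1
    push_cast
    ring
  have hstep : Real.exp (-(t / 30)) ≤ 30 / t := by
    have h1 : t / 30 ≤ Real.exp (t / 30) := by
      have := Real.add_one_le_exp (t / 30)
      linarith
    rw [Real.exp_neg, inv_le_comm₀ (Real.exp_pos _) (by positivity), inv_div]
    exact h1
  have hkey : Real.exp (-t) ≤ 10 ^ 31 / (C₃₂ ^ 30 * (d : ℝ) ^ 15) := by
    have h30t : (0:ℝ) ≤ 30 / t := by positivity
    have h1 : Real.exp (-t) ≤ (30 / t) ^ 30 := by
      rw [hexp30]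
      exact pow_le_pow_left₀ (Real.exp_nonneg _) hstep 30
    have h2 : 30 / t ≤ 2100 / (C₃₂ ^ 2 * d) := by
      have hCd : (0:ℝ) < C₃₂ ^ 2 * d := by
        have : (0:ℝ) < C₃₂ := by linarith
        positivity
      rw [div_le_div_iff₀ ht hCd, htdef]
      nlinarith [hCd]
    have h3 : (30 / t) ^ 30 ≤ (2100 / (C₃₂ ^ 2 * d)) ^ 30 := pow_le_pow_left₀ h30t h2 30
    refine h1.trans (h3.trans ?_)
    have hCd : (0:ℝ) < C₃₂ ^ 2 * d := by
      have : (0:ℝ) < C₃₂ := by linarith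
      positivity
    rw [div_pow, div_le_div_iff₀ (by positivity) hP]
    have hkey2 : (2100 : ℝ) ^ 30 ≤ 10 ^ 31 * C₃₂ ^ 30 * (d:ℝ) ^ 15 := by
      calc (2100 : ℝ) ^ 30 ≤ 10 ^ 31 * ((10:ℝ) ^ 6) ^ 30 * 1 := by norm_num
        _ ≤ 10 ^ 31 * C₃₂ ^ 30 * (d:ℝ) ^ 15 := by
            gcongr
            · linarith [hC]
            · simpa using pow_le_pow_left₀ (by norm_num : (0:ℝ) ≤ 1) hdR 15
    nlinarith [mul_le_mul_of_nonneg_right hkey2 hP.le, hP]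
  -- assemble
  have hexp1 : (1:ℝ) ≤ Real.exp (1.21 / 20000) := Real.one_le_exp (by norm_num)
  calc ε = (c ^ 2)⁻¹ * Real.exp (-t) := by rw [hεdef, htdef]
    _ ≤ (c ^ 2)⁻¹ * (10 ^ 31 / (C₃₂ ^ 30 * (d : ℝ) ^ 15)) :=
        mul_le_mul_of_nonneg_left hkey (by positivity)
    _ = 10 ^ 31 / (C₃₂ ^ 30 * c ^ 2 * (d : ℝ) ^ 15) := by
        field_simp
    _ ≤ 10 ^ 31 * Real.exp (1.21 / 20000) / (C₃₂ ^ 30 * c ^ 2 * (d : ℝ) ^ 15) := by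
        have hC0 : (0:ℝ) < C₃₂ := by linarith
        have hD : (0:ℝ) < C₃₂ ^ 30 * c ^ 2 * (d : ℝ) ^ 15 := by positivity
        rw [div_le_div_iff_of_pos_right hD]
        nlinarith [hexp1]
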